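/- Let H be a finitely generated projective Hopf k-algebra that is separable and involutive (S² = id). Then H is strongly separable in Kanzaki's sense: there exists e = Σⱼ zⱼ ⊗ wⱼ ∈ H ⊗ H with Σⱼ zⱼwⱼ = 1 and Σⱼ zⱼ a ⊗ wⱼ = Σⱼ zⱼ ⊗ a wⱼ for all a ∈ H. -/

import Mathlib

open scoped TensorProduct

open TensorProduct LinearMap Coalgebra HopfAlgebra
set_option maxHeartbeats 1000000
set_option synthInstance.maxHeartbeats 400000

section
variable (k H : Type*) [CommRing k] [Ring H] [HopfAlgebra k H]

noncomputable def Delta2 : (H ⊗[k] H) →ₗ[k] (H ⊗[k] H) ⊗[k] (H ⊗[k] H) :=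
  (tensorTensorTensorComm k H H H H).toLinearMap ∘ₗ map Coalgebra.comul Coalgebra.comul

/-- big shuffle `(a⊗(b⊗c))⊗(d⊗(e⊗f)) ↦ (a⊗d)⊗((b⊗e)⊗(c⊗f))`. -/
noncomputable def Theta' : (H ⊗[k] (H ⊗[k] H)) ⊗[k] (H ⊗[k] (H ⊗[k] H)) →ₗ[k]
    (H ⊗[k] H) ⊗[k] ((H ⊗[k] H) ⊗[k] (H ⊗[k] H)) :=
  (lTensor (H ⊗[k] H) (tensorTensorTensorComm k H H H H).toLinearMap) ∘ₗ
    (tensorTensorTensorComm k H (H ⊗[k] H) H (H ⊗[k] H)).toLinearMap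

noncomputable def Theta : ((H ⊗[k] H) ⊗[k] H) ⊗[k] ((H ⊗[k] H) ⊗[k] H) →ₗ[k]
    (H ⊗[k] H) ⊗[k] ((H ⊗[k] H) ⊗[k] (H ⊗[k] H)) :=
  Theta' k H ∘ₗ map (TensorProduct.assoc k H H H).toLinearMap (TensorProduct.assoc k H H H).toLinearMap

lemma stepR : lTensor (H ⊗[k] H) (Delta2 k H) ∘ₗ (tensorTensorTensorComm k H H H H).toLinearMap
    = Theta' k H ∘ₗ map (lTensor H (Coalgebra.comul (R := k))) (lTensor H Coalgebra.comul) := by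
  apply TensorProduct.ext_fourfold'
  intro x₁ x₂ y₁ y₂
  simp [Theta', Delta2, tensorTensorTensorComm_tmul]

lemma stepL : (TensorProduct.assoc k (H ⊗[k] H) (H ⊗[k] H) (H ⊗[k] H)).toLinearMap ∘ₗ
      rTensor (H ⊗[k] H) (Delta2 k H) ∘ₗ (tensorTensorTensorComm k H H H H).toLinearMap
    = Theta k H ∘ₗ map (rTensor H (Coalgebra.comul (R := k))) (rTensor H Coalgebra.comul) := by
  apply TensorProduct.ext_fourfold'
  intro x₁ x₂ y₁ y₂
  simp only [compl₂_apply, coe_comp, LinearEquiv.coe_coe, Function.comp_apply,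
    tensorTensorTensorComm_tmul, map_tmul, rTensor_tmul, Delta2]
  induction (Coalgebra.comul (R := k) x₁) using TensorProduct.induction_on with
  | zero => simp
  | tmul p₁ p₂ =>
    induction (Coalgebra.comul (R := k) y₁) using TensorProduct.induction_on with
    | zero => simp
    | tmul q₁ q₂ => simp [Theta, Theta', tensorTensorTensorComm_tmul]
    | add u v hu hv => simp only [tmul_add, add_tmul, map_add, hu, hv]
  | add u v hu hv => simp only [tmul_add, add_tmul, map_add, hu, hv]

lemma coassoc2 : (TensorProduct.assoc k (H ⊗[k] H) (H ⊗[k] H) (H ⊗[k] H)).toLinearMap ∘ₗ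
      rTensor (H ⊗[k] H) (Delta2 k H) ∘ₗ Delta2 k H
    = lTensor (H ⊗[k] H) (Delta2 k H) ∘ₗ Delta2 k H := by
  have h1 : (TensorProduct.assoc k (H ⊗[k] H) (H ⊗[k] H) (H ⊗[k] H)).toLinearMap ∘ₗ
      rTensor (H ⊗[k] H) (Delta2 k H) ∘ₗ Delta2 k H
      = (Theta k H ∘ₗ map (rTensor H (Coalgebra.comul (R := k))) (rTensor H Coalgebra.comul)) ∘ₗ
        map Coalgebra.comul Coalgebra.comul := by
    rw [← stepL]
    rfl
  have h2 : lTensor (H ⊗[k] H) (Delta2 k H) ∘ₗ Delta2 k H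
      = (Theta' k H ∘ₗ map (lTensor H (Coalgebra.comul (R := k))) (lTensor H Coalgebra.comul)) ∘ₗ
        map Coalgebra.comul Coalgebra.comul := by
    rw [← stepR]
    rfl
  have key : map (TensorProduct.assoc k H H H).toLinearMap (TensorProduct.assoc k H H H).toLinearMap
      ∘ₗ map (rTensor H (Coalgebra.comul (R := k)) ∘ₗ Coalgebra.comul)
          (rTensor H (Coalgebra.comul (R := k)) ∘ₗ Coalgebra.comul)
      = map (lTensor H (Coalgebra.comul (R := k)) ∘ₗ Coalgebra.comul)
          (lTensor H (Coalgebra.comul (R := k)) ∘ₗ Coalgebra.comul) := by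
    rw [← map_comp, Coalgebra.coassoc]
  rw [h1, h2, comp_assoc, ← map_comp, Theta, comp_assoc, key, comp_assoc, ← map_comp]


lemma Delta2_tmul (x y : H) :
    Delta2 k H (x ⊗ₜ[k] y) =
      (tensorTensorTensorComm k H H H H) ((Coalgebra.comul x) ⊗ₜ[k] (Coalgebra.comul y)) := rfl

noncomputable def eps2 : (H ⊗[k] H) →ₗ[k] k :=
  (TensorProduct.lid k k).toLinearMap ∘ₗ map Coalgebra.counit Coalgebra.counit

noncomputable def conv (f g : H ⊗[k] H →ₗ[k] H) : H ⊗[k] H →ₗ[k] H :=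
  mul' k H ∘ₗ map f g ∘ₗ Delta2 k H

lemma mulAssoc' : mul' k H ∘ₗ rTensor H (mul' k H) ∘ₗ
      (TensorProduct.assoc k H H H).symm.toLinearMap
    = mul' k H ∘ₗ lTensor H (mul' k H) := by
  apply TensorProduct.ext'
  intro x w
  induction w using TensorProduct.induction_on with
  | zero => simp
  | tmul y z => simp [mul_assoc]
  | add u v hu hv => simp only [tmul_add, map_add, hu, hv]

lemma conv_left_expand (f g h : H ⊗[k] H →ₗ[k] H) :
    conv k H (conv k H f g) h = mul' k H ∘ₗ rTensor H (mul' k H) ∘ₗ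
      map (map f g) h ∘ₗ rTensor (H ⊗[k] H) (Delta2 k H) ∘ₗ Delta2 k H := by
  unfold conv
  have e1 : map (mul' k H ∘ₗ map f g ∘ₗ Delta2 k H) h
      = rTensor H (mul' k H) ∘ₗ map (map f g) h ∘ₗ rTensor (H ⊗[k] H) (Delta2 k H) := by
    apply TensorProduct.ext'
    intros
    simp
  rw [e1, comp_assoc, comp_assoc]

lemma conv_right_expand (f g h : H ⊗[k] H →ₗ[k] H) :
    conv k H f (conv k H g h) = mul' k H ∘ₗ lTensor H (mul' k H) ∘ₗ
      map f (map g h) ∘ₗ lTensor (H ⊗[k] H) (Delta2 k H) ∘ₗ Delta2 k H := by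
  unfold conv
  have e1 : map f (mul' k H ∘ₗ map g h ∘ₗ Delta2 k H)
      = lTensor H (mul' k H) ∘ₗ map f (map g h) ∘ₗ lTensor (H ⊗[k] H) (Delta2 k H) := by
    apply TensorProduct.ext'
    intros
    simp
  rw [e1, comp_assoc, comp_assoc]

lemma conv_assoc (f g h : H ⊗[k] H →ₗ[k] H) :
    conv k H (conv k H f g) h = conv k H f (conv k H g h) := by
  apply LinearMap.ext
  intro w
  have e1 := LinearMap.congr_fun (conv_left_expand k H f g h) w
  have e2 := LinearMap.congr_fun (conv_right_expand k H f g h) w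
  simp only [coe_comp, Function.comp_apply] at e1 e2
  have c := LinearMap.congr_fun (coassoc2 k H) w
  simp only [coe_comp, Function.comp_apply, LinearEquiv.coe_coe] at c
  have c' : rTensor (H ⊗[k] H) (Delta2 k H) (Delta2 k H w)
      = (TensorProduct.assoc k (H ⊗[k] H) (H ⊗[k] H) (H ⊗[k] H)).symm
        (lTensor (H ⊗[k] H) (Delta2 k H) (Delta2 k H w)) := by
    rw [← c]
    simp
  rw [e1, e2, c', map_map_assoc_symm]
  have mA := LinearMap.congr_fun (mulAssoc' k H)
    (map f (map g h) (lTensor (H ⊗[k] H) (Delta2 k H) (Delta2 k H w)))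
  simp only [coe_comp, Function.comp_apply, LinearEquiv.coe_coe] at mA
  exact mA

lemma counit2_right (w : H ⊗[k] H) :
    (TensorProduct.rid k (H ⊗[k] H)) (lTensor (H ⊗[k] H) (eps2 k H) (Delta2 k H w)) = w := by
  have E1 : (TensorProduct.rid k (H ⊗[k] H)).toLinearMap ∘ₗ lTensor (H ⊗[k] H) (eps2 k H)
        ∘ₗ (tensorTensorTensorComm k H H H H).toLinearMap
      = map (TensorProduct.rid k H).toLinearMap (TensorProduct.rid k H).toLinearMap ∘ₗ
        map (lTensor H (Coalgebra.counit (R := k))) (lTensor H Coalgebra.counit) := by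
    apply TensorProduct.ext_fourfold'
    intro x₁ x₂ y₁ y₂
    simp [eps2, tensorTensorTensorComm_tmul, smul_tmul', tmul_smul, smul_smul, mul_comm]
  induction w using TensorProduct.induction_on with
  | zero => simp
  | tmul x y =>
    have := LinearMap.congr_fun E1 ((Coalgebra.comul (R := k) x) ⊗ₜ[k] (Coalgebra.comul (R := k) y))
    simp only [coe_comp, Function.comp_apply, LinearEquiv.coe_coe, map_tmul] at this
    rw [Delta2_tmul, this]
    simp
  | add u v hu hv => simp only [map_add, hu, hv]

lemma counit2_left (w : H ⊗[k] H) :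
    (TensorProduct.lid k (H ⊗[k] H)) (rTensor (H ⊗[k] H) (eps2 k H) (Delta2 k H w)) = w := by
  have E1 : (TensorProduct.lid k (H ⊗[k] H)).toLinearMap ∘ₗ rTensor (H ⊗[k] H) (eps2 k H)
        ∘ₗ (tensorTensorTensorComm k H H H H).toLinearMap
      = map (TensorProduct.lid k H).toLinearMap (TensorProduct.lid k H).toLinearMap ∘ₗ
        map (rTensor H (Coalgebra.counit (R := k))) (rTensor H Coalgebra.counit) := by
    apply TensorProduct.ext_fourfold'
    intro x₁ x₂ y₁ y₂
    simp [eps2, tensorTensorTensorComm_tmul, smul_tmul', tmul_smul, smul_smul, mul_comm]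
  induction w using TensorProduct.induction_on with
  | zero => simp
  | tmul x y =>
    have := LinearMap.congr_fun E1 ((Coalgebra.comul (R := k) x) ⊗ₜ[k] (Coalgebra.comul (R := k) y))
    simp only [coe_comp, Function.comp_apply, LinearEquiv.coe_coe, map_tmul] at this
    rw [Delta2_tmul, this]
    simp
  | add u v hu hv => simp only [map_add, hu, hv]

lemma conv_counit_right (f : H ⊗[k] H →ₗ[k] H) :
    conv k H f (Algebra.linearMap k H ∘ₗ eps2 k H) = f := by
  apply LinearMap.ext
  intro w
  have key : ∀ t : (H ⊗[k] H) ⊗[k] (H ⊗[k] H),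
      mul' k H (map f (Algebra.linearMap k H ∘ₗ eps2 k H) t)
        = f ((TensorProduct.rid k (H ⊗[k] H)) (lTensor (H ⊗[k] H) (eps2 k H) t)) := by
    intro t
    induction t using TensorProduct.induction_on with
    | zero => simp
    | tmul u v =>
      simp only [map_tmul, mul'_apply, coe_comp, Function.comp_apply, Algebra.linearMap_apply,
        lTensor_tmul, rid_tmul, map_smul]
      rw [Algebra.smul_def]
      exact (Algebra.commutes _ _).symm
    | add u v hu hv => simp only [map_add, hu, hv]
  have : conv k H f (Algebra.linearMap k H ∘ₗ eps2 k H) w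
      = mul' k H (map f (Algebra.linearMap k H ∘ₗ eps2 k H) (Delta2 k H w)) := rfl
  rw [this, key, counit2_right]

lemma conv_counit_left (g : H ⊗[k] H →ₗ[k] H) :
    conv k H (Algebra.linearMap k H ∘ₗ eps2 k H) g = g := by
  apply LinearMap.ext
  intro w
  have key : ∀ t : (H ⊗[k] H) ⊗[k] (H ⊗[k] H),
      mul' k H (map (Algebra.linearMap k H ∘ₗ eps2 k H) g t)
        = g ((TensorProduct.lid k (H ⊗[k] H)) (rTensor (H ⊗[k] H) (eps2 k H) t)) := by
    intro t
    induction t using TensorProduct.induction_on with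
    | zero => simp
    | tmul u v =>
      simp only [map_tmul, mul'_apply, coe_comp, Function.comp_apply, Algebra.linearMap_apply,
        rTensor_tmul, lid_tmul, map_smul]
      rw [Algebra.smul_def]
    | add u v hu hv => simp only [map_add, hu, hv]
  have : conv k H (Algebra.linearMap k H ∘ₗ eps2 k H) g w
      = mul' k H (map (Algebra.linearMap k H ∘ₗ eps2 k H) g (Delta2 k H w)) := rfl
  rw [this, key, counit2_left]


lemma eps2_tmul (x y : H) : eps2 k H (x ⊗ₜ[k] y) = Coalgebra.counit x * Coalgebra.counit y := by
  simp [eps2, smul_eq_mul]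

lemma antipode_one' : (antipode k : H →ₗ[k] H) 1 = 1 := by
  have h := mul_antipode_rTensor_comul_apply (R := k) (A := H) 1
  simpa [Algebra.TensorProduct.one_def] using h

lemma mulmul (u v : H ⊗[k] H) :
    map (mul' k H) (mul' k H) ((tensorTensorTensorComm k H H H H) (u ⊗ₜ[k] v)) = u * v := by
  induction u using TensorProduct.induction_on with
  | zero => simp
  | tmul p q =>
    induction v using TensorProduct.induction_on with
    | zero => simp
    | tmul r t => simp [tensorTensorTensorComm_tmul, Algebra.TensorProduct.tmul_mul_tmul]
    | add a b ha hb => simp only [tmul_add, map_add, mul_add, ha, hb]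
  | add a b ha hb => simp only [add_tmul, map_add, add_mul, ha, hb]

lemma map_mm_Delta2 :
    map (mul' k H) (mul' k H) ∘ₗ Delta2 k H = Coalgebra.comul ∘ₗ mul' k H := by
  apply TensorProduct.ext'
  intro x y
  simp only [coe_comp, Function.comp_apply, mul'_apply, Delta2_tmul]
  rw [mulmul]
  exact (Bialgebra.comul_mul x y).symm

lemma counit_mul'_eq : (Coalgebra.counit : H →ₗ[k] k) ∘ₗ mul' k H = eps2 k H := by
  apply TensorProduct.ext'
  intro x y
  simp [eps2_tmul]

lemma SFnu : conv k H ((antipode k : H →ₗ[k] H) ∘ₗ mul' k H) (mul' k H)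
    = Algebra.linearMap k H ∘ₗ eps2 k H := by
  apply LinearMap.ext
  intro w
  have h1 : ∀ t : (H ⊗[k] H) ⊗[k] (H ⊗[k] H),
      map ((antipode k : H →ₗ[k] H) ∘ₗ mul' k H) (mul' k H) t
        = rTensor H (antipode k : H →ₗ[k] H) (map (mul' k H) (mul' k H) t) := by
    intro t
    induction t using TensorProduct.induction_on with
    | zero => simp
    | tmul u v => simp
    | add a b ha hb => simp only [map_add, ha, hb]
  have : conv k H ((antipode k : H →ₗ[k] H) ∘ₗ mul' k H) (mul' k H) w
      = mul' k H (map ((antipode k : H →ₗ[k] H) ∘ₗ mul' k H) (mul' k H) (Delta2 k H w)) := rfl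
  rw [this, h1]
  have h2 := LinearMap.congr_fun (map_mm_Delta2 k H) w
  simp only [coe_comp, Function.comp_apply] at h2
  rw [h2, mul_antipode_rTensor_comul_apply]
  have h3 := LinearMap.congr_fun (counit_mul'_eq k H) w
  simp only [coe_comp, Function.comp_apply] at h3
  simp [h3]

noncomputable def innerG : H ⊗[k] H →ₗ[k] H :=
  mul' k H ∘ₗ (TensorProduct.comm k H H).toLinearMap ∘ₗ
    map (antipode k : H →ₗ[k] H) (antipode k : H →ₗ[k] H)

lemma innerG_tmul (x y : H) :
    innerG k H (x ⊗ₜ[k] y) = (antipode k : H →ₗ[k] H) y * (antipode k : H →ₗ[k] H) x := by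
  simp [innerG]

noncomputable def rhoMap : (H ⊗[k] H) ⊗[k] H →ₗ[k] H :=
  mul' k H ∘ₗ lTensor H (mul' k H ∘ₗ (TensorProduct.comm k H H).toLinearMap ∘ₗ
      rTensor H (antipode k : H →ₗ[k] H)) ∘ₗ (TensorProduct.assoc k H H H).toLinearMap

lemma rhoMap_tmul (p q c : H) :
    rhoMap k H ((p ⊗ₜ[k] q) ⊗ₜ[k] c) = p * (c * (antipode k : H →ₗ[k] H) q) := by
  simp [rhoMap]

lemma claimA : mul' k H ∘ₗ map (mul' k H) (innerG k H) ∘ₗ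
      (tensorTensorTensorComm k H H H H).toLinearMap
    = rhoMap k H ∘ₗ map (LinearMap.id : H ⊗[k] H →ₗ[k] H ⊗[k] H)
        (mul' k H ∘ₗ lTensor H (antipode k : H →ₗ[k] H)) := by
  apply TensorProduct.ext_fourfold'
  intro x₁ x₂ y₁ y₂
  simp [innerG, rhoMap, tensorTensorTensorComm_tmul, mul_assoc]

lemma rho_alg (u : H ⊗[k] H) (c : k) :
    rhoMap k H (u ⊗ₜ[k] (algebraMap k H c))
      = c • mul' k H (lTensor H (antipode k : H →ₗ[k] H) u) := by
  induction u using TensorProduct.induction_on with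
  | zero => simp
  | tmul p q =>
    rw [rhoMap_tmul]
    simp only [lTensor_tmul, mul'_apply]
    rw [← Algebra.smul_def, mul_smul_comm]
  | add a b ha hb => simp only [add_tmul, map_add, ha, hb, smul_add]

lemma nuG : conv k H (mul' k H) (innerG k H) = Algebra.linearMap k H ∘ₗ eps2 k H := by
  apply TensorProduct.ext'
  intro x y
  have h0 : conv k H (mul' k H) (innerG k H) (x ⊗ₜ[k] y)
      = mul' k H (map (mul' k H) (innerG k H) (Delta2 k H (x ⊗ₜ[k] y))) := rfl
  rw [h0, Delta2_tmul]
  have h1 := LinearMap.congr_fun (claimA k H)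
    ((Coalgebra.comul (R := k) x) ⊗ₜ[k] (Coalgebra.comul (R := k) y))
  simp only [coe_comp, Function.comp_apply, LinearEquiv.coe_coe, map_tmul, id_coe, id_eq] at h1
  rw [h1, mul_antipode_lTensor_comul_apply, rho_alg, mul_antipode_lTensor_comul_apply]
  rw [Algebra.smul_def, ← map_mul]
  simp only [coe_comp, Function.comp_apply, Algebra.linearMap_apply, eps2_tmul]
  rw [mul_comm]

lemma antipode_mul_map : (antipode k : H →ₗ[k] H) ∘ₗ mul' k H = innerG k H := by
  have h := conv_assoc k H ((antipode k : H →ₗ[k] H) ∘ₗ mul' k H) (mul' k H) (innerG k H)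
  rw [SFnu, nuG, conv_counit_left, conv_counit_right] at h
  exact h.symm

lemma antipode_mul_rev (a b : H) :
    (antipode k : H →ₗ[k] H) (a * b)
      = (antipode k : H →ₗ[k] H) b * (antipode k : H →ₗ[k] H) a := by
  have h := LinearMap.congr_fun (antipode_mul_map k H) (a ⊗ₜ[k] b)
  simpa [innerG_tmul] using h


lemma antipode_algebraMap (c : k) :
    (antipode k : H →ₗ[k] H) (algebraMap k H c) = algebraMap k H c := by
  rw [Algebra.algebraMap_eq_smul_one, map_smul, antipode_one']

lemma mapSS_rTensorS (hinv : ∀ x : H, (antipode k : H →ₗ[k] H) ((antipode k : H →ₗ[k] H) x) = x)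
    (u : H ⊗[k] H) :
    map (antipode k : H →ₗ[k] H) (antipode k : H →ₗ[k] H)
        (rTensor H (antipode k : H →ₗ[k] H) u)
      = lTensor H (antipode k : H →ₗ[k] H) u := by
  induction u using TensorProduct.induction_on with
  | zero => simp
  | tmul p q => simp [hinv]
  | add a b ha hb => simp only [map_add, ha, hb]

lemma skew (hinv : ∀ x : H, (antipode k : H →ₗ[k] H) ((antipode k : H →ₗ[k] H) x) = x) (a : H) :
    mul' k H ((TensorProduct.comm k H H)
        (lTensor H (antipode k : H →ₗ[k] H) (Coalgebra.comul a)))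
      = algebraMap k H (Coalgebra.counit a) := by
  have h1 := mul_antipode_rTensor_comul_apply (R := k) (A := H) a
  have h2 := congrArg (antipode k : H →ₗ[k] H) h1
  rw [antipode_algebraMap] at h2
  have h3 := LinearMap.congr_fun (antipode_mul_map k H)
    (rTensor H (antipode k : H →ₗ[k] H) (Coalgebra.comul a))
  simp only [coe_comp, Function.comp_apply] at h3
  rw [h3] at h2
  simp only [innerG, coe_comp, Function.comp_apply, LinearEquiv.coe_coe] at h2
  rw [mapSS_rTensorS k H hinv] at h2
  exact h2

noncomputable def betaMap : (H ⊗[k] H) →ₗ[k] (H ⊗[k] H) →ₗ[k] (H ⊗[k] H) :=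
  TensorProduct.lift (LinearMap.mk₂ k
    (fun p q => map (mulLeft k ((antipode k : H →ₗ[k] H) p)) (mulRight k q))
    (fun p₁ p₂ q => by
      apply TensorProduct.ext'
      intro x y
      simp [map_add, add_mul, add_tmul])
    (fun c p q => by
      apply TensorProduct.ext'
      intro x y
      simp [map_smul, smul_mul_assoc, smul_tmul'])
    (fun p q₁ q₂ => by
      apply TensorProduct.ext'
      intro x y
      simp [mul_add, tmul_add])
    (fun c p q => by
      apply TensorProduct.ext'
      intro x y
      simp [mul_smul_comm, tmul_smul]))

lemma betaMap_tmul (p q x y : H) :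
    betaMap k H (p ⊗ₜ[k] q) (x ⊗ₜ[k] y)
      = ((antipode k : H →ₗ[k] H) p * x) ⊗ₜ[k] (y * q) := by
  simp [betaMap]

lemma B1 (u : H ⊗[k] H) (a : H) :
    rTensor H (mulRight k a) (rTensor H (antipode k : H →ₗ[k] H) u)
      = betaMap k H u (a ⊗ₜ[k] 1) := by
  induction u using TensorProduct.induction_on with
  | zero => simp
  | tmul p q => simp [betaMap_tmul]
  | add v w hv hw => simp only [map_add, LinearMap.add_apply, hv, hw]

lemma B2 (u : H ⊗[k] H) (a : H) :
    lTensor H (mulLeft k a) (rTensor H (antipode k : H →ₗ[k] H) u)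
      = betaMap k H u ((1 : H) ⊗ₜ[k] a) := by
  induction u using TensorProduct.induction_on with
  | zero => simp
  | tmul p q => simp [betaMap_tmul]
  | add v w hv hw => simp only [map_add, LinearMap.add_apply, hv, hw]

lemma Lmul (v u : H ⊗[k] H) (x : H) :
    betaMap k H (v * u) (x ⊗ₜ[k] 1)
      = betaMap k H u ((rTensor H (antipode k : H →ₗ[k] H) v) * (x ⊗ₜ[k] 1)) := by
  induction v using TensorProduct.induction_on with
  | zero => simp
  | tmul b c =>
    induction u using TensorProduct.induction_on with
    | zero => simp
    | tmul p q =>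
      simp only [Algebra.TensorProduct.tmul_mul_tmul, betaMap_tmul, rTensor_tmul]
      rw [antipode_mul_rev]
      simp [mul_assoc]
    | add u₁ u₂ h₁ h₂ => simp only [mul_add, map_add, LinearMap.add_apply, h₁, h₂]
  | add v₁ v₂ h₁ h₂ =>
    simp only [add_mul, map_add, LinearMap.add_apply, h₁, h₂]

noncomputable def muMap : H ⊗[k] (H ⊗[k] H) →ₗ[k] H ⊗[k] H :=
  TensorProduct.lift (LinearMap.mk₂ k
    (fun (x : H) (u : H ⊗[k] H) => (rTensor H (antipode k : H →ₗ[k] H) u) * (x ⊗ₜ[k] (1 : H)))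
    (fun x₁ x₂ u => by rw [add_tmul, mul_add])
    (fun c x u => by rw [← smul_tmul', mul_smul_comm])
    (fun x u₁ u₂ => by rw [map_add, add_mul])
    (fun c x u => by rw [map_smul, smul_mul_assoc]))

lemma muMap_tmul (x : H) (u : H ⊗[k] H) :
    muMap k H (x ⊗ₜ[k] u) = (rTensor H (antipode k : H →ₗ[k] H) u) * (x ⊗ₜ[k] (1 : H)) := by
  simp [muMap]

noncomputable def FMap : H ⊗[k] (H ⊗[k] H) →ₗ[k] H ⊗[k] H :=
  TensorProduct.lift (LinearMap.mk₂ k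
    (fun (x : H) (u : H ⊗[k] H) => betaMap k H u (x ⊗ₜ[k] (1 : H)))
    (fun x₁ x₂ u => by rw [add_tmul, map_add])
    (fun c x u => by rw [← smul_tmul', map_smul])
    (fun x u₁ u₂ => by rw [map_add, LinearMap.add_apply])
    (fun c x u => by rw [map_smul, LinearMap.smul_apply]))

lemma FMap_tmul (x : H) (u : H ⊗[k] H) :
    FMap k H (x ⊗ₜ[k] u) = betaMap k H u (x ⊗ₜ[k] (1 : H)) := by
  simp [FMap]


lemma C1 (D : H ⊗[k] H) (w : H ⊗[k] H) :
    FMap k H (lTensor H ((mulRight k D) ∘ₗ (Coalgebra.comul (R := k) (A := H))) w)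
      = betaMap k H D (muMap k H (lTensor H (Coalgebra.comul (R := k) (A := H)) w)) := by
  induction w using TensorProduct.induction_on with
  | zero => simp
  | tmul x b =>
    simp only [lTensor_tmul, coe_comp, Function.comp_apply, mulRight_apply, FMap_tmul,
      muMap_tmul]
    exact Lmul k H (Coalgebra.comul b) D x
  | add u v hu hv => simp only [map_add, hu, hv]

lemma C3 (D : H ⊗[k] H) (w : H ⊗[k] H) :
    FMap k H (lTensor H ((toSpanSingleton k (H ⊗[k] H) D) ∘ₗ (Coalgebra.counit (R := k) (A := H))) w)
      = betaMap k H D (((TensorProduct.rid k H) (lTensor H (Coalgebra.counit (R := k) (A := H)) w)) ⊗ₜ[k] (1 : H)) := by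
  induction w using TensorProduct.induction_on with
  | zero => simp
  | tmul x b =>
    simp only [lTensor_tmul, coe_comp, Function.comp_apply, toSpanSingleton_apply, FMap_tmul,
      rid_tmul, map_smul, LinearMap.smul_apply]
    rw [← smul_tmul', map_smul]
  | add u v hu hv => simp only [map_add, add_tmul, hu, hv]

lemma C2 (hinv : ∀ x : H, (antipode k : H →ₗ[k] H) ((antipode k : H →ₗ[k] H) x) = x) (a : H) :
    muMap k H (lTensor H (Coalgebra.comul (R := k) (A := H)) (Coalgebra.comul a))
      = (1 : H) ⊗ₜ[k] a := by
  have hassoc : ∀ t : (H ⊗[k] H) ⊗[k] H,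
      muMap k H ((TensorProduct.assoc k H H H) t)
        = rTensor H (mul' k H ∘ₗ (TensorProduct.comm k H H).toLinearMap ∘ₗ
            lTensor H (antipode k : H →ₗ[k] H)) t := by
    intro t
    induction t using TensorProduct.induction_on with
    | zero => simp
    | tmul pq z =>
      induction pq using TensorProduct.induction_on with
      | zero => simp [zero_tmul]
      | tmul p q =>
        simp [muMap_tmul, Algebra.TensorProduct.tmul_mul_tmul]
      | add a b ha hb => simp only [add_tmul, map_add, ha, hb]
    | add a b ha hb => simp only [map_add, ha, hb]
  have hco := Coalgebra.coassoc_apply (R := k) a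
  rw [← hco, hassoc]
  have hP : ∀ t : H ⊗[k] H,
      rTensor H (mul' k H ∘ₗ (TensorProduct.comm k H H).toLinearMap ∘ₗ
          lTensor H (antipode k : H →ₗ[k] H)) (rTensor H (Coalgebra.comul (R := k) (A := H)) t)
        = rTensor H (Algebra.linearMap k H) (rTensor H (Coalgebra.counit (R := k) (A := H)) t) := by
    intro t
    induction t using TensorProduct.induction_on with
    | zero => simp
    | tmul z w =>
      simp only [rTensor_tmul, coe_comp, Function.comp_apply, LinearEquiv.coe_coe,
        Algebra.linearMap_apply]
      rw [skew k H hinv]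
    | add u v hu hv => simp only [map_add, hu, hv]
  rw [hP, Coalgebra.rTensor_counit_comul]
  simp

end


/-- A finitely generated projective Hopf `k`-algebra that is separable (has a separability
idempotent) and involutive (`S² = id`) is strongly separable in Kanzaki's sense: there is
`e = Σⱼ zⱼ ⊗ wⱼ ∈ H ⊗ H` with `Σⱼ zⱼ wⱼ = 1` and `Σⱼ zⱼ a ⊗ wⱼ = Σⱼ zⱼ ⊗ a wⱼ` for all
`a ∈ H`. -/
theorem separable_involutive_strongly_separable (k H : Type*) [CommRing k] [Ring H]
    [HopfAlgebra k H] [Module.Finite k H] [Module.Projective k H]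
    (hsep : ∃ e : H ⊗[k] H, LinearMap.mul' k H e = 1 ∧
      ∀ a : H, (LinearMap.rTensor H (LinearMap.mulLeft k a)) e
        = (LinearMap.lTensor H (LinearMap.mulRight k a)) e)
    (hinv : ∀ x : H, HopfAlgebra.antipode (R := k) (HopfAlgebra.antipode (R := k) x) = x) :
    ∃ e : H ⊗[k] H, LinearMap.mul' k H e = 1 ∧
      ∀ a : H, (LinearMap.rTensor H (LinearMap.mulRight k a)) e
        = (LinearMap.lTensor H (LinearMap.mulLeft k a)) e := by
  classical
  obtain ⟨e, he1, he2⟩ := hsep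
  have s1 : ∀ a : H, ∀ t : H ⊗[k] H,
      a * (TensorProduct.rid k H) ((lTensor H (Coalgebra.counit (R := k) (A := H))) t)
        = (TensorProduct.rid k H) ((lTensor H (Coalgebra.counit (R := k) (A := H)))
            ((rTensor H (mulLeft k a)) t)) := by
    intro a t
    induction t using TensorProduct.induction_on with
    | zero => simp
    | tmul z w => simp [mul_smul_comm]
    | add u v hu hv => simp only [map_add, mul_add, hu, hv]
  have s2 : ∀ a : H, ∀ t : H ⊗[k] H,
      (TensorProduct.rid k H) ((lTensor H (Coalgebra.counit (R := k) (A := H)))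
          ((lTensor H (mulRight k a)) t))
        = Coalgebra.counit (R := k) a •
            (TensorProduct.rid k H) ((lTensor H (Coalgebra.counit (R := k) (A := H))) t) := by
    intro a t
    induction t using TensorProduct.induction_on with
    | zero => simp
    | tmul z w =>
      simp only [lTensor_tmul, mulRight_apply, rid_tmul, Bialgebra.counit_mul, smul_smul]
      rw [mul_comm]
    | add u v hu hv => simp only [map_add, smul_add, hu, hv]
  set Λ : H := (TensorProduct.rid k H) ((lTensor H (Coalgebra.counit (R := k) (A := H))) e)
    with hLdef
  have hΛint : ∀ a : H, a * Λ = Coalgebra.counit (R := k) a • Λ := by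
    intro a
    calc a * Λ = (TensorProduct.rid k H) ((lTensor H (Coalgebra.counit (R := k) (A := H)))
        ((rTensor H (mulLeft k a)) e)) := s1 a e
      _ = (TensorProduct.rid k H) ((lTensor H (Coalgebra.counit (R := k) (A := H)))
        ((lTensor H (mulRight k a)) e)) := by rw [he2 a]
      _ = Coalgebra.counit (R := k) a • Λ := s2 a e
  have hεΛ : Coalgebra.counit (R := k) Λ = 1 := by
    have s3 : ∀ t : H ⊗[k] H, Coalgebra.counit (R := k)
        ((TensorProduct.rid k H) ((lTensor H (Coalgebra.counit (R := k) (A := H))) t))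
          = Coalgebra.counit (R := k) (LinearMap.mul' k H t) := by
      intro t
      induction t using TensorProduct.induction_on with
      | zero => simp
      | tmul z w =>
        simp only [lTensor_tmul, rid_tmul, map_smul, mul'_apply, Bialgebra.counit_mul,
          smul_eq_mul]
        rw [mul_comm]
      | add u v hu hv => simp only [map_add, hu, hv]
    rw [hLdef, s3, he1, Bialgebra.counit_one]
  set D := Coalgebra.comul (R := k) Λ with hDdef
  have hD : ∀ a : H, Coalgebra.comul (R := k) a * D = Coalgebra.counit (R := k) a • D := by
    intro a
    have h := congrArg (Coalgebra.comul (R := k) (A := H)) (hΛint a)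
    rw [Bialgebra.comul_mul, map_smul] at h
    exact h
  refine ⟨LinearMap.rTensor H (HopfAlgebra.antipode (R := k)) D, ?_, ?_⟩
  · rw [hDdef, mul_antipode_rTensor_comul_apply, hεΛ, map_one]
  · intro a
    rw [B1 k H D a, B2 k H D a]
    have hgg' : (mulRight k D) ∘ₗ (Coalgebra.comul (R := k) (A := H))
        = (toSpanSingleton k (H ⊗[k] H) D) ∘ₗ (Coalgebra.counit (R := k) (A := H)) := by
      apply LinearMap.ext
      intro b
      simp only [coe_comp, Function.comp_apply, mulRight_apply, toSpanSingleton_apply]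
      exact hD b
    have t1 : FMap k H (lTensor H ((mulRight k D) ∘ₗ (Coalgebra.comul (R := k) (A := H)))
        (Coalgebra.comul a)) = betaMap k H D ((1 : H) ⊗ₜ[k] a) := by
      rw [C1, C2 k H hinv a]
    have t3 : FMap k H (lTensor H ((toSpanSingleton k (H ⊗[k] H) D) ∘ₗ
        (Coalgebra.counit (R := k) (A := H))) (Coalgebra.comul a))
          = betaMap k H D (a ⊗ₜ[k] (1 : H)) := by
      rw [C3, Coalgebra.lTensor_counit_comul]
      simp
    rw [← t3, ← hgg', t1]
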